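/- Let f : ℝ → ℝ satisfy (f(y) - f(y'))·(y - y') ≤ L·|y - y'|² for all y, y' ∈ ℝ. Define f_n(y) = inf_{x ∈ ℝ} { n·|y - x| + f(x) - L·x } + L·y (assuming the infimum is finite for all y). Then f_n also satisfies the same one-sided Lipschitz condition: (f_n(y) - f_n(y'))·(y - y') ≤ L·|y - y'|² for all y, y' ∈ ℝ. -/
import Mathlib


open Real

theorem stmt2 (f : ℝ → ℝ) (L : ℝ) (hL : 0 < L)
    (hmono : ∀ y y', (f y - f y') * (y - y') ≤ L * |y - y'| ^ 2)
    (hbdd : ∀ n : ℕ, ∀ y : ℝ,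
      BddBelow (Set.range fun x : ℝ => (n : ℝ) * |y - x| + f x - L * x))
    (fn : ℕ → ℝ → ℝ)
    (hfn : ∀ n y, fn n y = (⨅ x : ℝ, ((n : ℝ) * |y - x| + f x - L * x)) + L * y) :
    ∀ n : ℕ, ∀ y y' : ℝ, (fn n y - fn n y') * (y - y') ≤ L * |y - y'| ^ 2 := by
  -- g is nonincreasing
  have hg : ∀ a b : ℝ, a ≤ b → f b - L * b ≤ f a - L * a := by
    intro a b hab
    rcases eq_or_lt_of_le hab with rfl | hlt
    · exact le_refl _
    · have := hmono b a
      rw [abs_of_pos (by linarith : (0:ℝ) < b - a)] at this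
      nlinarith
  -- h is antitone
  have hh : ∀ (n : ℕ) (a b : ℝ), a ≤ b →
      (⨅ x : ℝ, ((n : ℝ) * |b - x| + f x - L * x)) ≤
      (⨅ x : ℝ, ((n : ℝ) * |a - x| + f x - L * x)) := by
    intro n a b hab
    apply le_ciInf
    intro x
    have key : (⨅ x : ℝ, ((n : ℝ) * |b - x| + f x - L * x)) ≤
        (n : ℝ) * |b - (x + (b - a))| + f (x + (b - a)) - L * (x + (b - a)) :=
      ciInf_le (hbdd n b) (x + (b - a))
    have h1 : |b - (x + (b - a))| = |a - x| := by ring_nf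
    rw [h1] at key
    have h2 := hg x (x + (b - a)) (by linarith)
    linarith
  intro n y y'
  rw [hfn, hfn]
  rcases le_total y y' with h | h
  · have := hh n y y' h
    have habs : |y - y'| = y' - y := by rw [abs_of_nonpos (by linarith)]; ring
    rw [habs]
    nlinarith [mul_nonneg (sub_nonneg.2 this) (sub_nonneg.2 h)]
  · have := hh n y' y h
    have habs : |y - y'| = y - y' := abs_of_nonneg (by linarith)
    rw [habs]
    nlinarith [mul_nonneg (sub_nonneg.2 this) (sub_nonneg.2 h)]
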